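/- Let D be a self-adjoint operator on H and a a bounded operator on H. If a is weakly D-differentiable (i.e., the sesquilinear form (ξ,η) ↦ ⟨aξ, Dη⟩ − ⟨aDξ, η⟩ on dom(D) × dom(D) is bounded, implemented by a bounded operator wD(a)), then for all real t, ‖e^{itD} a e^{-itD} − a‖ ≤ |t| · ‖wD(a)‖. -/
import Mathlib


open Complex Filter Topology MeasureTheory
open scoped Topology

local notation "⟪" x ", " y "⟫" => @inner ℂ _ _ x y

variable {H : Type*} [NormedAddCommGroup H] [InnerProductSpace ℂ H] [CompleteSpace H]

/-- `b` is the bounded operator implementing the commutator form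
`(ξ, η) ↦ ⟨aξ, Dη⟩ − ⟨aDξ, η⟩` on `dom D × dom D`; i.e. `a` is weakly `D`-differentiable
with derivative `wD(a) = b`. -/
def IsWeakDeriv (D : H →ₗ.[ℂ] H) (a b : H →L[ℂ] H) : Prop :=
  ∀ ξ η : D.domain, ⟪b (ξ : H), (η : H)⟫ = ⟪a (ξ : H), D η⟫ - ⟪a (D ξ), (η : H)⟫

/-- `conjAd U t a = U t ∘ a ∘ U (−t)`, i.e. `α_t(a) = e^{itD} a e^{-itD}`. -/
noncomputable def conjAd (U : ℝ → H →L[ℂ] H) (t : ℝ) (a : H →L[ℂ] H) : H →L[ℂ] H :=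
  (U t).comp (a.comp (U (-t)))

/-- `U` is the strongly continuous one-parameter unitary group `t ↦ e^{itD}`
generated by the self-adjoint operator `D` (Stone's theorem characterization). -/
structure IsStoneGroupOf (D : H →ₗ.[ℂ] H) (U : ℝ → H →L[ℂ] H) : Prop where
  map_zero : U 0 = 1
  map_add : ∀ s t : ℝ, U (s + t) = (U s).comp (U t)
  isometry : ∀ (t : ℝ) (ξ : H), ‖U t ξ‖ = ‖ξ‖
  hasDerivAt : ∀ ξ : D.domain, HasDerivAt (fun t : ℝ => U t (ξ : H)) (Complex.I • D ξ) 0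
  mem_domain : ∀ ξ v : H, HasDerivAt (fun t : ℝ => U t ξ) v 0 → ξ ∈ D.domain

/-- If `a` is weakly `D`-differentiable with derivative `b = wD(a)` then
`‖α_t(a) − a‖ ≤ |t| ‖wD(a)‖` for every real `t`. -/
theorem norm_conjAd_sub_le_of_isWeakDeriv
    (D : H →ₗ.[ℂ] H) (hD : IsSelfAdjoint D)
    (U : ℝ → H →L[ℂ] H) (hU : IsStoneGroupOf D U)
    (a b : H →L[ℂ] H) (hw : IsWeakDeriv D a b) :
    ∀ t : ℝ, ‖conjAd U t a - a‖ ≤ |t| * ‖b‖ := by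
  intro t
  -- Group law pointwise
  have hGrp : ∀ (s r : ℝ) (x : H), U (s + r) x = U s (U r x) := fun s r x => by
    rw [hU.map_add]; rfl
  have hInv : ∀ (s : ℝ) (x : H), U s (U (-s) x) = x := fun s x => by
    have h := (hGrp s (-s) x).symm
    rwa [add_neg_cancel, hU.map_zero, ContinuousLinearMap.one_apply] at h
  -- Inner products are preserved
  have hInner : ∀ (s : ℝ) (x y : H), ⟪U s x, U s y⟫ = ⟪x, y⟫ := fun s x y =>
    LinearIsometry.inner_map_map ⟨(U s).toLinearMap, hU.isometry s⟩ x y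
  -- Derivative of the orbit at an arbitrary time
  have hDeriv : ∀ (ξ : D.domain) (s : ℝ),
      HasDerivAt (fun r : ℝ => U r (ξ : H)) (I • U s (D ξ)) s := by
    intro ξ s
    have h1 : HasDerivAt (fun r : ℝ => U s (U r (ξ : H))) (U s (I • D ξ)) 0 := by
      exact ((U s).hasFDerivAt.restrictScalars ℝ).comp_hasDerivAt 0 (hU.hasDerivAt ξ)
    have h2 : HasDerivAt (fun r : ℝ => U (s + r) (ξ : H)) (U s (I • D ξ)) 0 := by
      simp only [hGrp]; exact h1
    have h3 := HasDerivAt.comp_const_add (f := fun r : ℝ => U (s + r) (ξ : H))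
      (f' := U s (I • D ξ)) (-s) s (by rw [neg_add_cancel]; exact h2)
    have h4 : HasDerivAt (fun r : ℝ => U r (ξ : H)) (U s (I • D ξ)) s := by
      simpa [add_neg_cancel_left] using h3
    simpa [_root_.map_smul] using h4
  -- The domain is invariant, and D commutes with U s there
  have key2 : ∀ (ξ : D.domain) (s : ℝ),
      ∃ h : U s (ξ : H) ∈ D.domain, D ⟨U s (ξ : H), h⟩ = U s (D ξ) := by
    intro ξ s
    have h := HasDerivAt.comp_add_const (f := fun r : ℝ => U r (ξ : H))
      (f' := I • U s (D ξ)) 0 s (by rw [zero_add]; exact hDeriv ξ s)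
    have h' : HasDerivAt (fun r : ℝ => U r (U s (ξ : H))) (I • U s (D ξ)) 0 := by
      simp only [← hGrp]; exact h
    have hmem : U s (ξ : H) ∈ D.domain := hU.mem_domain _ _ h'
    refine ⟨hmem, ?_⟩
    have huniq := (hU.hasDerivAt ⟨U s (ξ : H), hmem⟩).unique h'
    exact smul_right_injective H Complex.I_ne_zero huniq
  -- the key estimate on matrix coefficients over the domain
  have key : ∀ ξ η : D.domain,
      ‖⟪(conjAd U t a - a) (ξ : H), (η : H)⟫‖ ≤ (‖b‖ * ‖(ξ : H)‖ * ‖(η : H)‖) * |t| := by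
    intro ξ η
    set C : ℝ := ‖b‖ * ‖(ξ : H)‖ * ‖(η : H)‖ with hCdef
    set g : ℝ → ℂ := fun s => ⟪a (U (-s) (ξ : H)), U (-s) (η : H)⟫ with hgdef
    set g' : ℝ → ℂ := fun s => -I * ⟪b (U (-s) (ξ : H)), U (-s) (η : H)⟫ with hg'def
    have hg : ∀ s : ℝ, HasDerivAt g (g' s) s := by
      intro s
      have hneg : HasDerivAt (fun r : ℝ => -r) (-1 : ℝ) s := (hasDerivAt_id s).neg
      have hφ : HasDerivAt (fun r : ℝ => U (-r) (ξ : H)) ((-1 : ℝ) • (I • U (-s) (D ξ))) s :=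
        (hDeriv ξ (-s)).scomp s hneg
      have hψ : HasDerivAt (fun r : ℝ => U (-r) (η : H)) ((-1 : ℝ) • (I • U (-s) (D η))) s :=
        (hDeriv η (-s)).scomp s hneg
      have haφ : HasDerivAt (fun r : ℝ => a (U (-r) (ξ : H)))
          (a ((-1 : ℝ) • (I • U (-s) (D ξ)))) s := by
        exact (a.hasFDerivAt.restrictScalars ℝ).comp_hasDerivAt s hφ
      have hD := haφ.inner ℂ hψ
      have hval : ⟪a (U (-s) (ξ : H)), (-1 : ℝ) • (I • U (-s) (D η))⟫
          + ⟪a ((-1 : ℝ) • (I • U (-s) (D ξ))), U (-s) (η : H)⟫ = g' s := by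
        obtain ⟨hmξ, hcξ⟩ := key2 ξ (-s)
        obtain ⟨hmη, hcη⟩ := key2 η (-s)
        have hwk := hw ⟨U (-s) (ξ : H), hmξ⟩ ⟨U (-s) (η : H), hmη⟩
        rw [hcξ, hcη] at hwk
        simp only [hg'def]
        rw [hwk]
        simp only [neg_one_smul, map_neg, _root_.map_smul, inner_neg_right, inner_neg_left,
          inner_smul_right, inner_smul_left, Complex.conj_I]
        ring
      rw [← hval]
      exact hD
    have hbound : ∀ s : ℝ, ‖g' s‖ ≤ C := by
      intro s
      have h1 : ‖g' s‖ = ‖⟪b (U (-s) (ξ : H)), U (-s) (η : H)⟫‖ := by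
        simp [hg'def]
      rw [h1]
      calc ‖⟪b (U (-s) (ξ : H)), U (-s) (η : H)⟫‖
          ≤ ‖b (U (-s) (ξ : H))‖ * ‖U (-s) (η : H)‖ := norm_inner_le_norm _ _
        _ ≤ (‖b‖ * ‖U (-s) (ξ : H)‖) * ‖U (-s) (η : H)‖ :=
            mul_le_mul_of_nonneg_right (b.le_opNorm _) (norm_nonneg _)
        _ = C := by rw [hU.isometry, hU.isometry, hCdef, mul_assoc]
    have hmvt : ‖g t - g 0‖ ≤ C * ‖t - (0 : ℝ)‖ :=
      Convex.norm_image_sub_le_of_norm_hasDerivWithin_le (s := (Set.univ : Set ℝ))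
        (fun x _ => (hg x).hasDerivWithinAt) (fun x _ => hbound x) convex_univ
        (Set.mem_univ 0) (Set.mem_univ t)
    have hg0 : g 0 = ⟪a (ξ : H), (η : H)⟫ := by
      simp [hgdef, hU.map_zero]
    have hgt : ⟪(conjAd U t a) (ξ : H), (η : H)⟫ = g t := by
      have hη : (η : H) = U t (U (-t) (η : H)) := (hInv t (η : H)).symm
      calc ⟪(conjAd U t a) (ξ : H), (η : H)⟫
          = ⟪U t (a (U (-t) (ξ : H))), U t (U (-t) (η : H))⟫ := by
            rw [← hη]; rfl
        _ = g t := hInner t _ _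
    have heq : ⟪(conjAd U t a - a) (ξ : H), (η : H)⟫ = g t - g 0 := by
      rw [ContinuousLinearMap.sub_apply, inner_sub_left, hgt, hg0]
    rw [heq]
    calc ‖g t - g 0‖ ≤ C * ‖t - (0 : ℝ)‖ := hmvt
      _ = C * |t| := by rw [sub_zero, Real.norm_eq_abs]
  -- extend the estimate by density
  set T : H →L[ℂ] H := conjAd U t a - a with hT
  have hdense : Dense (D.domain : Set H) := hD.dense_domain
  have step1 : ∀ (ξ : D.domain) (y : H),
      ‖⟪T (ξ : H), y⟫‖ ≤ (|t| * ‖b‖) * ‖(ξ : H)‖ * ‖y‖ := by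
    intro ξ
    have hclosed : IsClosed {y : H | ‖⟪T (ξ : H), y⟫‖ ≤ (|t| * ‖b‖) * ‖(ξ : H)‖ * ‖y‖} :=
      isClosed_le ((continuous_const.inner continuous_id).norm)
        ((continuous_const.mul continuous_norm))
    have hsub : (D.domain : Set H) ⊆
        {y : H | ‖⟪T (ξ : H), y⟫‖ ≤ (|t| * ‖b‖) * ‖(ξ : H)‖ * ‖y‖} := by
      intro z hz
      have h := key ξ ⟨z, hz⟩
      simp only [Set.mem_setOf_eq]
      calc ‖⟪T (ξ : H), z⟫‖ ≤ (‖b‖ * ‖(ξ : H)‖ * ‖z‖) * |t| := h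
        _ = (|t| * ‖b‖) * ‖(ξ : H)‖ * ‖z‖ := by ring
    intro y
    have h := hclosed.closure_subset_iff.2 hsub
    rw [hdense.closure_eq] at h
    exact h (Set.mem_univ y)
  have step2 : ∀ (x y : H), ‖⟪T x, y⟫‖ ≤ (|t| * ‖b‖) * ‖x‖ * ‖y‖ := by
    intro x y
    have hclosed : IsClosed {x : H | ‖⟪T x, y⟫‖ ≤ (|t| * ‖b‖) * ‖x‖ * ‖y‖} :=
      isClosed_le ((T.continuous.inner continuous_const).norm)
        (((continuous_const.mul continuous_norm).mul continuous_const))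
    have hsub : (D.domain : Set H) ⊆
        {x : H | ‖⟪T x, y⟫‖ ≤ (|t| * ‖b‖) * ‖x‖ * ‖y‖} := fun z hz => step1 ⟨z, hz⟩ y
    have h := hclosed.closure_subset_iff.2 hsub
    rw [hdense.closure_eq] at h
    exact h (Set.mem_univ x)
  apply ContinuousLinearMap.opNorm_le_bound _ (mul_nonneg (abs_nonneg t) (norm_nonneg b))
  intro x
  rcases eq_or_lt_of_le (norm_nonneg (T x)) with h0 | h0
  · rw [← h0]; positivity
  · have h := step2 x (T x)
    have h2 : ‖⟪T x, T x⟫‖ = ‖T x‖ * ‖T x‖ := by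
      rw [inner_self_eq_norm_sq_to_K]
      simp [sq]
    rw [h2] at h
    have h3 : ‖T x‖ * ‖T x‖ ≤ ((|t| * ‖b‖) * ‖x‖) * ‖T x‖ := by
      calc ‖T x‖ * ‖T x‖ ≤ (|t| * ‖b‖) * ‖x‖ * ‖T x‖ := h
        _ = ((|t| * ‖b‖) * ‖x‖) * ‖T x‖ := by ring
    exact le_of_mul_le_mul_right h3 h0
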